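/- There exists n₀ such that for all integers n ≥ n₀ the following holds: if X₁ and X₂ are independent random vectors each distributed as the standard n-dimensional Gaussian N(0,I_{n×n}), then for every real r > 0, Pr[‖X₁ − X₂‖ ≤ r] ≤ 8ⁿ·(r²/n)^{n/2}. -/

import Mathlib

open MeasureTheory ProbabilityTheory
open scoped ENNReal NNReal Real

/-- The standard Gaussian distribution `N(0, I_{n×n})` on `ℝⁿ`, as the product of `n` copies of
the standard normal distribution on `ℝ`. -/
noncomputable def stdGaussian (n : ℕ) : Measure (Fin n → ℝ) :=
  Measure.pi fun _ => gaussianReal 0 1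

/-- A lintegral of a product of single-coordinate functions over a finite product measure
factors as a product of lintegrals. -/
theorem lintegral_pi_fin_prod {α : Type*} [MeasurableSpace α] (μ : Measure α) [SigmaFinite μ] :
    ∀ (n : ℕ) (f : Fin n → α → ℝ≥0∞), (∀ i, Measurable (f i)) →
      ∫⁻ x : Fin n → α, ∏ i, f i (x i) ∂(Measure.pi fun _ => μ) = ∏ i, ∫⁻ x, f i x ∂μ
  | 0, f, _ => by
      simp [Measure.pi_of_empty]
  | (n+1), f, hf => by
      have hmp := (measurePreserving_piFinSuccAbove (fun _ : Fin (n+1) => μ) 0)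
      rw [(hmp.symm _).lintegral_map_equiv (fun x => ∏ i, f i (x i))
        (MeasurableEquiv.piFinSuccAbove (fun _ => α) 0).symm]
      have : ∀ p : α × (Fin n → α),
          (∏ i, f i (((MeasurableEquiv.piFinSuccAbove (fun _ => α) 0).symm p) i))
            = f 0 p.1 * ∏ j : Fin n, f j.succ (p.2 j) := by
        intro p
        rw [Fin.prod_univ_succ]
        simp [MeasurableEquiv.piFinSuccAbove_symm_apply, Fin.insertNthEquiv,
          Fin.insertNth_zero, Fin.zero_succAbove]
      simp_rw [this]
      rw [lintegral_prod_mul (f := f 0) (g := fun y : Fin n → α => ∏ j, f j.succ (y j))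
        (hf 0).aemeasurable
        (Finset.measurable_prod _ fun j _ => (hf j.succ).comp (measurable_pi_apply j)).aemeasurable]
      rw [lintegral_pi_fin_prod μ n (fun j => f j.succ) (fun j => hf j.succ), Fin.prod_univ_succ]

/-- One-dimensional Chernoff-type bound: for a standard gaussian `y` and any `x`,
`E[exp (-t (x - y)^2)] ≤ √(π/t) / √(2π)`. -/
theorem lintegral_gauss_exp_le {t : ℝ} (ht : 0 < t) (x : ℝ) :
    ∫⁻ y, ENNReal.ofReal (Real.exp (-(t * (x - y) ^ 2))) ∂(gaussianReal 0 1)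
      ≤ ENNReal.ofReal (Real.sqrt (π / t) * (Real.sqrt (2 * π))⁻¹) := by
  have hmeas : Measurable fun y : ℝ => ENNReal.ofReal (Real.exp (-(t * (x - y) ^ 2))) := by
    fun_prop
  rw [gaussianReal_of_var_ne_zero 0 one_ne_zero,
    lintegral_withDensity_eq_lintegral_mul _ (measurable_gaussianPDF 0 1) hmeas]
  have hb : ∀ y : ℝ, (gaussianPDF 0 1 * fun y => ENNReal.ofReal (Real.exp (-(t * (x - y) ^ 2)))) y
      ≤ ENNReal.ofReal ((Real.sqrt (2 * π))⁻¹) * ENNReal.ofReal (Real.exp (-(t * (x - y) ^ 2))) := by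
    intro y
    simp only [Pi.mul_apply]
    gcongr
    rw [gaussianPDF, ENNReal.ofReal_le_ofReal_iff (by positivity)]
    unfold gaussianPDFReal
    simp only [NNReal.coe_one, mul_one, sub_zero]
    calc (Real.sqrt (2 * π))⁻¹ * Real.exp (-y ^ 2 / 2)
        ≤ (Real.sqrt (2 * π))⁻¹ * 1 := by
          gcongr
          exact Real.exp_le_one_iff.2 (by nlinarith [sq_nonneg y])
      _ = (Real.sqrt (2 * π))⁻¹ := mul_one _
  calc ∫⁻ y, (gaussianPDF 0 1 * fun y => ENNReal.ofReal (Real.exp (-(t * (x - y) ^ 2)))) y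
      ≤ ∫⁻ y, ENNReal.ofReal ((Real.sqrt (2 * π))⁻¹)
          * ENNReal.ofReal (Real.exp (-(t * (x - y) ^ 2))) := lintegral_mono hb
    _ = ENNReal.ofReal ((Real.sqrt (2 * π))⁻¹)
          * ∫⁻ y, ENNReal.ofReal (Real.exp (-(t * (x - y) ^ 2))) := lintegral_const_mul _ hmeas
    _ = ENNReal.ofReal ((Real.sqrt (2 * π))⁻¹) * ENNReal.ofReal (Real.sqrt (π / t)) := by
        congr 1
        have h1 : (fun y : ℝ => ENNReal.ofReal (Real.exp (-(t * (x - y) ^ 2))))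
            = fun y : ℝ => ENNReal.ofReal (Real.exp (-(t * (y + -x) ^ 2))) := by
          funext y; congr 2; ring
        rw [h1, lintegral_add_right_eq_self
          (fun y : ℝ => ENNReal.ofReal (Real.exp (-(t * y ^ 2)))) (-x)]
        rw [← ofReal_integral_eq_lintegral_ofReal ?int (ae_of_all _ fun y => (Real.exp_pos _).le)]
        · congr 1
          simp_rw [neg_mul_eq_neg_mul]
          exact integral_gaussian t
        · simpa [neg_mul] using integrable_exp_neg_mul_sq ht
    _ = ENNReal.ofReal (Real.sqrt (π / t) * (Real.sqrt (2 * π))⁻¹) := by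
        rw [← ENNReal.ofReal_mul (by positivity), mul_comm]

/-- **Two independent standard Gaussian points are far apart.** There exists `n₀` such that for
all `n ≥ n₀`: if `X₁, X₂` are independent standard `n`-dimensional Gaussians (modelled by the
product measure `stdGaussian n ⊗ stdGaussian n`), then for every real `r > 0`,
`Pr[‖X₁ − X₂‖ ≤ r] ≤ 8ⁿ·(r²/n)^{n/2}`, where `‖·‖` is the Euclidean norm. -/
theorem gaussian_points_far_apart :
    ∃ n₀ : ℕ, ∀ n : ℕ, n₀ ≤ n → ∀ r : ℝ, 0 < r →
      (((stdGaussian n).prod (stdGaussian n))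
          {p : (Fin n → ℝ) × (Fin n → ℝ) |
            Real.sqrt (∑ i, (p.1 i - p.2 i) ^ 2) ≤ r}).toReal
        ≤ 8 ^ n * (r ^ 2 / n) ^ ((n : ℝ) / 2) := by
  refine ⟨1, fun n hn r hr => ?_⟩
  have hn0 : (0 : ℝ) < n := by exact_mod_cast hn
  set t : ℝ := n / (2 * r ^ 2) with ht_def
  have ht : 0 < t := by positivity
  have hγ : IsProbabilityMeasure (stdGaussian n) := by
    unfold _root_.stdGaussian; infer_instance
  set μ := (stdGaussian n).prod (stdGaussian n) with hμ
  set S : Set ((Fin n → ℝ) × (Fin n → ℝ)) :=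
    {p | Real.sqrt (∑ i, (p.1 i - p.2 i) ^ 2) ≤ r} with hSdef
  have hmeas_sum : Measurable fun p : (Fin n → ℝ) × (Fin n → ℝ) =>
      ∑ i, (p.1 i - p.2 i) ^ 2 := by fun_prop
  have hS : MeasurableSet S := by
    have : S = (fun p : (Fin n → ℝ) × (Fin n → ℝ) =>
        Real.sqrt (∑ i, (p.1 i - p.2 i) ^ 2)) ⁻¹' Set.Iic r := rfl
    rw [this]
    exact (hmeas_sum.sqrt) measurableSet_Iic
  -- the Chernoff-type integrand
  set g : Fin n → ((Fin n → ℝ) × (Fin n → ℝ)) → ℝ≥0∞ :=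
    fun i p => ENNReal.ofReal (Real.exp (-(t * (p.1 i - p.2 i) ^ 2))) with hg
  have hgmeas : ∀ i, Measurable (g i) := by intro i; fun_prop
  -- Step A : μ S ≤ ∫⁻ exp(t r² - t Σ)
  have stepA : μ S ≤ ∫⁻ p, ENNReal.ofReal
      (Real.exp (t * r ^ 2 - t * ∑ i, (p.1 i - p.2 i) ^ 2)) ∂μ := by
    rw [← lintegral_indicator_one hS]
    refine lintegral_mono fun p => ?_
    by_cases hp : p ∈ S
    · rw [Set.indicator_of_mem hp]
      refine ENNReal.one_le_ofReal.2 (Real.one_le_exp ?_)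
      have h1 : ∑ i, (p.1 i - p.2 i) ^ 2 ≤ r ^ 2 := by
        have h2 : (0:ℝ) ≤ ∑ i, (p.1 i - p.2 i) ^ 2 :=
          Finset.sum_nonneg fun i _ => sq_nonneg _
        have h3 : Real.sqrt (∑ i, (p.1 i - p.2 i) ^ 2) ≤ r := hp
        nlinarith [Real.sq_sqrt h2, Real.sqrt_nonneg (∑ i, (p.1 i - p.2 i) ^ 2)]
      nlinarith
    · rw [Set.indicator_of_notMem hp]
      exact zero_le
  -- Step B : rewrite the integrand as a product
  have stepB : ∀ p : (Fin n → ℝ) × (Fin n → ℝ),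
      ENNReal.ofReal (Real.exp (t * r ^ 2 - t * ∑ i, (p.1 i - p.2 i) ^ 2))
        = ENNReal.ofReal (Real.exp (t * r ^ 2)) * ∏ i, g i p := by
    intro p
    have h1 : t * r ^ 2 - t * ∑ i, (p.1 i - p.2 i) ^ 2
        = t * r ^ 2 + ∑ i, -(t * (p.1 i - p.2 i) ^ 2) := by
      rw [Finset.sum_neg_distrib, ← Finset.mul_sum]; ring
    rw [h1, Real.exp_add, Real.exp_sum, ENNReal.ofReal_mul (Real.exp_pos _).le,
      ENNReal.ofReal_prod_of_nonneg (fun i _ => (Real.exp_pos _).le)]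
  -- the per-coordinate constant
  set c : ℝ≥0∞ := ENNReal.ofReal (Real.sqrt (π / t) * (Real.sqrt (2 * π))⁻¹) with hc
  -- Step C : Chernoff bound
  have stepC : μ S ≤ ENNReal.ofReal (Real.exp (t * r ^ 2)) * c ^ n := by
    refine stepA.trans ?_
    simp_rw [stepB]
    rw [lintegral_const_mul _ (Finset.measurable_prod _ fun i _ => hgmeas i)]
    refine mul_le_mul_right ?_ _
    have hprod : ∫⁻ p, ∏ i, g i p ∂μ
        = ∫⁻ x, ∫⁻ y, ∏ i, ENNReal.ofReal (Real.exp (-(t * (x i - y i) ^ 2)))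
            ∂(stdGaussian n) ∂(stdGaussian n) := by
      rw [hμ, lintegral_prod _ (Finset.measurable_prod _ fun i _ => hgmeas i).aemeasurable]
    rw [hprod]
    have hinner : ∀ x : Fin n → ℝ,
        ∫⁻ y, ∏ i, ENNReal.ofReal (Real.exp (-(t * (x i - y i) ^ 2))) ∂(stdGaussian n)
          ≤ c ^ n := by
      intro x
      have heq : ∫⁻ y, ∏ i, ENNReal.ofReal (Real.exp (-(t * (x i - y i) ^ 2))) ∂(stdGaussian n)
          = ∏ i, ∫⁻ v, ENNReal.ofReal (Real.exp (-(t * (x i - v) ^ 2))) ∂(gaussianReal 0 1) := by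
        exact lintegral_pi_fin_prod (gaussianReal 0 1) n
          (fun i v => ENNReal.ofReal (Real.exp (-(t * (x i - v) ^ 2)))) (fun i => by fun_prop)
      rw [heq]
      calc ∏ i, ∫⁻ v, ENNReal.ofReal (Real.exp (-(t * (x i - v) ^ 2))) ∂(gaussianReal 0 1)
          ≤ ∏ _i : Fin n, c :=
            Finset.prod_le_prod' fun i _ => lintegral_gauss_exp_le ht (x i)
        _ = c ^ n := by rw [Finset.prod_const, Finset.card_univ, Fintype.card_fin]
    calc ∫⁻ x, ∫⁻ y, ∏ i, ENNReal.ofReal (Real.exp (-(t * (x i - y i) ^ 2)))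
            ∂(stdGaussian n) ∂(stdGaussian n)
        ≤ ∫⁻ _x, c ^ n ∂(stdGaussian n) := lintegral_mono hinner
      _ = c ^ n := by rw [lintegral_const, measure_univ, mul_one]
  -- Step D : numerics
  have hrn : (0:ℝ) ≤ r ^ 2 / n := by positivity
  have hcval : Real.sqrt (π / t) * (Real.sqrt (2 * π))⁻¹ = Real.sqrt (r ^ 2 / n) := by
    rw [← Real.sqrt_inv, ← Real.sqrt_mul (by positivity)]
    congr 1
    rw [ht_def]
    field_simp
  have htr : t * r ^ 2 = n / 2 := by
    rw [ht_def]; field_simp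
  have hbound : μ S ≤ ENNReal.ofReal
      (Real.exp ((n:ℝ) / 2) * Real.sqrt (r ^ 2 / n) ^ n) := by
    refine stepC.trans_eq ?_
    rw [hc, hcval, htr, ← ENNReal.ofReal_pow (Real.sqrt_nonneg _),
      ← ENNReal.ofReal_mul (Real.exp_pos _).le]
  have hfinal : Real.exp ((n:ℝ) / 2) * Real.sqrt (r ^ 2 / n) ^ n
      ≤ 8 ^ n * (r ^ 2 / n) ^ ((n : ℝ) / 2) := by
    have h1 : Real.sqrt (r ^ 2 / n) ^ n = (r ^ 2 / n) ^ ((n : ℝ) / 2) := by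
      rw [Real.sqrt_eq_rpow, ← Real.rpow_natCast ((r ^ 2 / n) ^ (1/2 : ℝ)) n,
        ← Real.rpow_mul hrn]
      congr 1
      ring
    have h2 : Real.exp ((n:ℝ) / 2) = Real.exp (1/2 : ℝ) ^ n := by
      rw [← Real.exp_nat_mul]
      congr 1
      ring
    rw [h1, h2]
    refine mul_le_mul_of_nonneg_right ?_ (Real.rpow_nonneg hrn _)
    refine pow_le_pow_left₀ (Real.exp_pos _).le ?_ n
    calc Real.exp (1/2 : ℝ) ≤ Real.exp 1 := Real.exp_le_exp.2 (by norm_num)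
      _ ≤ 8 := le_of_lt (lt_trans Real.exp_one_lt_d9 (by norm_num))
  refine le_trans (ENNReal.toReal_le_of_le_ofReal (by positivity) hbound) hfinal
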